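/- Let Ω ⊂ ℝⁿ be an open set with finite measure and let U ⊂ Ω be a subset of positive measure such that |Ω \ U|/|Ω| ≤ α(Ω)/4. Then α(U) ≥ α(Ω)/2. -/
import Mathlib


open MeasureTheory Metric Set Filter
open scoped ENNReal symmDiff Topology

noncomputable section

/-- The distribution function `μ(t) = |{x ∈ A : |u(x)| > t}|` of `u` relative to a set `A`. -/
def distFun {α : Type*} [MeasureSpace α] (A : Set α) (u : α → ℝ) (t : ℝ) : ℝ :=
  (volume {x ∈ A | t < |u x|}).toReal

/-- The decreasing rearrangement `u*(s) = inf {t ≥ 0 : μ(t) < s}`. -/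
def decRear {α : Type*} [MeasureSpace α] (A : Set α) (u : α → ℝ) (s : ℝ) : ℝ :=
  sInf {t : ℝ | 0 ≤ t ∧ distFun A u t < s}

/-- `ω_n`, the Lebesgue measure of the unit ball of `ℝⁿ`. -/
def unitBallVol (n : ℕ) : ℝ := (volume (ball (0 : EuclideanSpace ℝ (Fin n)) 1)).toReal

variable {n : ℕ}

/-- The radius of the centered ball having the same measure as `Ω`. -/
def symRad (Ω : Set (EuclideanSpace ℝ (Fin n))) : ℝ :=
  ((volume Ω).toReal / unitBallVol n) ^ ((1 : ℝ) / n)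

/-- `Ω^♯`, the ball centered at the origin with the same Lebesgue measure as `Ω`. -/
def ballSym (Ω : Set (EuclideanSpace ℝ (Fin n))) : Set (EuclideanSpace ℝ (Fin n)) :=
  ball (0 : EuclideanSpace ℝ (Fin n)) (symRad Ω)

/-- The Schwarz (spherically symmetric decreasing) rearrangement
`u^♯(x) = u*(ω_n |x|ⁿ)` of `u`. -/
def schwarz (Ω : Set (EuclideanSpace ℝ (Fin n))) (u : EuclideanSpace ℝ (Fin n) → ℝ)
    (x : EuclideanSpace ℝ (Fin n)) : ℝ :=
  decRear Ω u (unitBallVol n * ‖x‖ ^ n)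

/-- The increasing rearrangement `f_♯` of `f`, defined on `Ω^♯`:
the spherically symmetric function, increasing in `|x|`, equidistributed with `f`. -/
def incRear (Ω : Set (EuclideanSpace ℝ (Fin n))) (f : EuclideanSpace ℝ (Fin n) → ℝ)
    (x : EuclideanSpace ℝ (Fin n)) : ℝ :=
  decRear Ω f ((volume Ω).toReal - unitBallVol n * ‖x‖ ^ n)

/-- The Fraenkel asymmetry index
`α(Ω) = min_x { |Ω △ B_r(x)| / |B_r(x)| : |B_r(x)| = |Ω| }`. -/
def asym (Ω : Set (EuclideanSpace ℝ (Fin n))) : ℝ :=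
  ⨅ x : EuclideanSpace ℝ (Fin n),
    (volume (Ω ∆ ball x (symRad Ω))).toReal / (volume (ball x (symRad Ω))).toReal

/-- The norm of the (a.e. defined) gradient, `|∇u|(x)`. -/
def gradNorm (u : EuclideanSpace ℝ (Fin n) → ℝ) (x : EuclideanSpace ℝ (Fin n)) : ℝ :=
  ‖fderiv ℝ u x‖

/-- `u ∈ W^{1,1}_0(Ω)` solves `|∇u| = f` a.e. in `Ω`, with `u = 0` on `∂Ω`
(`u` is extended by zero outside `Ω`). -/
def IsHJSol (Ω : Set (EuclideanSpace ℝ (Fin n))) (f u : EuclideanSpace ℝ (Fin n) → ℝ) : Prop :=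
  (∀ x ∉ Ω, u x = 0) ∧ IntegrableOn u Ω ∧ IntegrableOn (gradNorm u) Ω ∧
    ∀ᵐ x ∂volume.restrict Ω, DifferentiableAt ℝ u x ∧ gradNorm u x = f x

/-- A spherically symmetric function, decreasing in `|x|`. -/
def IsRadDec (u : EuclideanSpace ℝ (Fin n) → ℝ) : Prop :=
  ∃ φ : ℝ → ℝ, AntitoneOn φ (Ici 0) ∧ ∀ x, u x = φ ‖x‖

lemma unitBallVol_pos (n : ℕ) : 0 < unitBallVol n := by
  have h1 : 0 < volume (ball (0 : EuclideanSpace ℝ (Fin n)) 1) :=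
    measure_ball_pos volume 0 one_pos
  have h2 : volume (ball (0 : EuclideanSpace ℝ (Fin n)) 1) < ⊤ := measure_ball_lt_top
  exact ENNReal.toReal_pos h1.ne' h2.ne

lemma symRad_nonneg (S : Set (EuclideanSpace ℝ (Fin n))) : 0 ≤ symRad S :=
  Real.rpow_nonneg (div_nonneg ENNReal.toReal_nonneg (unitBallVol_pos n).le) _

lemma vol_ball_symRad (hn : 0 < n) (S : Set (EuclideanSpace ℝ (Fin n))) (hS : volume S < ⊤)
    (x : EuclideanSpace ℝ (Fin n)) :
    volume (ball x (symRad S)) = volume S := by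
  have : Nontrivial (EuclideanSpace ℝ (Fin n)) := by
    have : 0 < Module.finrank ℝ (EuclideanSpace ℝ (Fin n)) := by
      rw [finrank_euclideanSpace_fin]; exact hn
    exact Module.nontrivial_of_finrank_pos this
  have hω : 0 < unitBallVol n := unitBallVol_pos n
  have ha : 0 ≤ (volume S).toReal / unitBallVol n :=
    div_nonneg ENNReal.toReal_nonneg hω.le
  have hr : (symRad S) ^ Module.finrank ℝ (EuclideanSpace ℝ (Fin n))
      = (volume S).toReal / unitBallVol n := by
    rw [finrank_euclideanSpace_fin, symRad, ← Real.rpow_natCast _ n, ← Real.rpow_mul ha,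
      one_div, inv_mul_cancel₀ (by exact_mod_cast hn.ne' : (n : ℝ) ≠ 0), Real.rpow_one]
  rw [Measure.addHaar_ball volume x (symRad_nonneg S), hr]
  have hb : volume (ball (0 : EuclideanSpace ℝ (Fin n)) 1) = ENNReal.ofReal (unitBallVol n) :=
    (ENNReal.ofReal_toReal measure_ball_lt_top.ne).symm
  rw [hb, ← ENNReal.ofReal_mul ha, div_mul_cancel₀ _ hω.ne',
    ENNReal.ofReal_toReal hS.ne]

/-- Lemma 2.12: if `Ω ⊆ ℝⁿ` is open with finite measure and `U ⊆ Ω`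
has positive measure with `|Ω \ U|/|Ω| ≤ α(Ω)/4`, then `α(U) ≥ α(Ω)/2`. -/
theorem asymmetry_propagation (n : ℕ)
    (Ω U : Set (EuclideanSpace ℝ (Fin n))) (hΩo : IsOpen Ω) (hΩf : volume Ω < ⊤)
    (hUΩ : U ⊆ Ω) (hUm : MeasurableSet U) (hUpos : 0 < volume U)
    (h : (volume (Ω \ U)).toReal / (volume Ω).toReal ≤ asym Ω / 4) :
    asym Ω / 2 ≤ asym U := by
  have hasymU_nonneg : 0 ≤ asym U :=
    Real.iInf_nonneg fun x => div_nonneg ENNReal.toReal_nonneg ENNReal.toReal_nonneg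
  have hasymΩ_nonneg : 0 ≤ asym Ω :=
    Real.iInf_nonneg fun x => div_nonneg ENNReal.toReal_nonneg ENNReal.toReal_nonneg
  have hΩpos : 0 < volume Ω := lt_of_lt_of_le hUpos (measure_mono hUΩ)
  rcases Nat.eq_zero_or_pos n with hn | hn
  · -- n = 0 : the space is a single point; asym Ω = 0
    subst hn
    have hsub : Subsingleton (EuclideanSpace ℝ (Fin 0)) := by
      infer_instance
    have hΩne : Ω.Nonempty := nonempty_of_measure_ne_zero hΩpos.ne'
    have hΩuniv : Ω = univ := by
      rcases hΩne with ⟨a, ha⟩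
      ext y; simp only [mem_univ, iff_true]
      rwa [Subsingleton.elim y a]
    have hball : ∀ x : EuclideanSpace ℝ (Fin 0), ball x (symRad Ω) = univ := by
      intro x
      have hr : symRad Ω = 1 := by
        simp [symRad, Real.rpow_zero]
      ext y; simp only [mem_univ, iff_true, mem_ball, hr]
      rw [Subsingleton.elim y x, dist_self]; norm_num
    have hΩ0 : asym Ω ≤ 0 := by
      have hb : BddBelow (Set.range fun x : EuclideanSpace ℝ (Fin 0) =>
          (volume (Ω ∆ ball x (symRad Ω))).toReal / (volume (ball x (symRad Ω))).toReal) :=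
        ⟨0, by rintro _ ⟨x, rfl⟩; exact div_nonneg ENNReal.toReal_nonneg ENNReal.toReal_nonneg⟩
      have hterm : (volume (Ω ∆ ball (0 : EuclideanSpace ℝ (Fin 0)) (symRad Ω))).toReal /
          (volume (ball (0 : EuclideanSpace ℝ (Fin 0)) (symRad Ω))).toReal = 0 := by
        rw [hball 0, hΩuniv, symmDiff_self]
        simp
      calc asym Ω ≤ _ := ciInf_le hb (0 : EuclideanSpace ℝ (Fin 0))
        _ = 0 := hterm
    linarith
  · -- main case
    have hUf : volume U < ⊤ := lt_of_le_of_lt (measure_mono hUΩ) hΩf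
    set rΩ := symRad Ω with hrΩ
    set rU := symRad U with hrU
    have hBΩ : ∀ x, volume (ball x rΩ) = volume Ω := vol_ball_symRad hn Ω hΩf
    have hBU : ∀ x, volume (ball x rU) = volume U := vol_ball_symRad hn U hUf
    set A := (volume Ω).toReal with hA
    set u := (volume U).toReal with hu
    set δ := (volume (Ω \ U)).toReal with hδ
    have hApos : 0 < A := ENNReal.toReal_pos hΩpos.ne' hΩf.ne
    have hupos : 0 < u := ENNReal.toReal_pos hUpos.ne' hUf.ne
    have huA : u ≤ A := ENNReal.toReal_mono hΩf.ne (measure_mono hUΩ)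
    have hδ0 : 0 ≤ δ := ENNReal.toReal_nonneg
    have hδA : δ / A ≤ asym Ω / 4 := h
    have hδle : 2 * δ ≤ asym Ω / 2 * A := by
      have : δ ≤ asym Ω / 4 * A := (div_le_iff₀ hApos).mp hδA
      nlinarith
    have hrUΩ : rU ≤ rΩ := by
      apply Real.rpow_le_rpow (div_nonneg ENNReal.toReal_nonneg (unitBallVol_pos n).le)
      · gcongr
        exact (unitBallVol_pos n).le
      · positivity
    -- symmetric difference of concentric balls
    have hballdiff : ∀ x : EuclideanSpace ℝ (Fin n), volume (ball x rU ∆ ball x rΩ) = volume (Ω \ U) := by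
      intro x
      rw [symmDiff_of_le (ball_subset_ball hrUΩ)]
      rw [measure_diff (ball_subset_ball hrUΩ) measurableSet_ball.nullMeasurableSet
        (lt_of_le_of_lt (le_of_eq (hBU x)) hUf).ne, hBΩ, hBU]
      rw [measure_diff hUΩ hUm.nullMeasurableSet hUf.ne]
    -- key pointwise inequality
    have key : ∀ x : EuclideanSpace ℝ (Fin n), asym Ω * A - 2 * δ ≤ (volume (U ∆ ball x rU)).toReal := by
      intro x
      -- asym Ω * A ≤ |Ω ∆ B_Ω(x)|
      have hb : BddBelow (Set.range fun x : EuclideanSpace ℝ (Fin n) =>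
          (volume (Ω ∆ ball x rΩ)).toReal / (volume (ball x rΩ)).toReal) :=
        ⟨0, by rintro _ ⟨y, rfl⟩; exact div_nonneg ENNReal.toReal_nonneg ENNReal.toReal_nonneg⟩
      have h1 : asym Ω ≤ (volume (Ω ∆ ball x rΩ)).toReal / (volume (ball x rΩ)).toReal :=
        ciInf_le hb x
      rw [hBΩ x] at h1
      have hMfin : volume (Ω ∆ ball x rΩ) < ⊤ := by
        apply lt_of_le_of_lt (measure_mono (symmDiff_subset_union))
        exact lt_of_le_of_lt (measure_union_le _ _)
          (ENNReal.add_lt_top.mpr ⟨hΩf, (hBΩ x ▸ hΩf : volume (ball x rΩ) < ⊤)⟩)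
      have h2 : asym Ω * A ≤ (volume (Ω ∆ ball x rΩ)).toReal :=
        (le_div_iff₀ hApos).mp h1
      -- triangle inequality for symmDiff
      have htri : volume (Ω ∆ ball x rΩ) ≤
          volume (Ω ∆ U) + volume (U ∆ ball x rU) + volume (ball x rU ∆ ball x rΩ) := by
        calc volume (Ω ∆ ball x rΩ)
            ≤ volume ((Ω ∆ U) ∪ (U ∆ ball x rΩ)) := measure_mono (symmDiff_triangle Ω U _)
          _ ≤ volume (Ω ∆ U) + volume (U ∆ ball x rΩ) := measure_union_le _ _
          _ ≤ volume (Ω ∆ U) + (volume (U ∆ ball x rU) + volume (ball x rU ∆ ball x rΩ)) := by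
              gcongr
              exact le_trans (measure_mono (symmDiff_triangle U (ball x rU) _))
                (measure_union_le _ _)
          _ = _ := by ring
      rw [symmDiff_comm Ω U, symmDiff_of_le hUΩ, hballdiff x] at htri
      have hUBfin : volume (U ∆ ball x rU) < ⊤ := by
        apply lt_of_le_of_lt (measure_mono (symmDiff_subset_union))
        exact lt_of_le_of_lt (measure_union_le _ _)
          (ENNReal.add_lt_top.mpr ⟨hUf, (hBU x ▸ hUf : volume (ball x rU) < ⊤)⟩)
      have hΩUfin : volume (Ω \ U) < ⊤ := lt_of_le_of_lt (measure_mono (diff_subset)) hΩf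
      have htri' : (volume (Ω ∆ ball x rΩ)).toReal ≤
          (volume (U ∆ ball x rU)).toReal + 2 * δ := by
        have := ENNReal.toReal_mono (by
          exact (ENNReal.add_lt_top.mpr ⟨ENNReal.add_lt_top.mpr ⟨hΩUfin, hUBfin⟩, hΩUfin⟩).ne) htri
        rw [ENNReal.toReal_add (ENNReal.add_lt_top.mpr ⟨hΩUfin, hUBfin⟩).ne hΩUfin.ne,
          ENNReal.toReal_add hΩUfin.ne hUBfin.ne] at this
        linarith
      linarith
    -- conclude
    refine le_ciInf fun x => ?_
    rw [← hrU, hBU x, le_div_iff₀ hupos]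
    have hk := key x
    have hmul : asym Ω / 2 * u ≤ asym Ω / 2 * A :=
      mul_le_mul_of_nonneg_left huA (by linarith)
    nlinarith
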